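/- For the MDPDE loss in the linear mixed model with y ~ N(Xβ, V), the β-block of the generalized information matrix equals E[∇_β ρ ∇_β ρ^T] = α² L₂² |V|^{-α} (1+2α)^{-(1+m/2)} X^T V^{-1} X, which is positive definite whenever V is positive definite and X has full column rank. -/

import Mathlib

open MeasureTheory Matrix Real

section Aux

lemma gauss0 : ∫ x : ℝ, exp (-(1/2) * x ^ 2) = Real.sqrt (2 * π) := by
  rw [integral_gaussian, show π / (1/2) = 2 * π by ring]

lemma gauss1 : ∫ x : ℝ, x * exp (-(1/2) * x ^ 2) = 0 := by
  have h := integral_neg_eq_self (fun x : ℝ => x * exp (-(1/2) * x ^ 2)) volume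
  simp only [neg_sq, neg_mul] at h ⊢
  rw [integral_neg] at h
  linarith

lemma gauss2 : ∫ x : ℝ, x ^ 2 * exp (-(1/2) * x ^ 2) = Real.sqrt (2 * π) := by
  have h1 := integral_comp_abs (f := fun t : ℝ => t ^ 2 * exp (-(1/2) * t ^ 2))
  simp only [sq_abs] at h1
  have h3 : ∫ x in Set.Ioi (0:ℝ), x ^ 2 * exp (-(1/2) * x ^ 2)
      = ((1:ℝ)/2) ^ (-(2+1)/2 : ℝ) * (1/2) * Gamma ((2+1)/2) := by
    have := integral_rpow_mul_exp_neg_mul_rpow (p := 2) (q := 2) (b := 1/2)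
      (by norm_num) (by norm_num) (by norm_num)
    rw [← this]
    refine setIntegral_congr_fun measurableSet_Ioi (fun x _ => ?_)
    norm_num
  rw [h3] at h1
  have hg : Gamma ((2+1)/2 : ℝ) = Real.sqrt π / 2 := by
    rw [show ((2+1)/2 : ℝ) = 1/2 + 1 by norm_num, Gamma_add_one (by norm_num),
      Gamma_one_half_eq]; ring
  have hb : ((1:ℝ)/2) ^ (-(2+1)/2 : ℝ) = 2 * Real.sqrt 2 := by
    rw [show (-(2+1)/2 : ℝ) = -(3/2) by norm_num, one_div, Real.inv_rpow (by norm_num),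
      Real.rpow_neg (by norm_num), inv_inv, show ((3:ℝ)/2) = 1 + 1/2 by norm_num,
      Real.rpow_add (by norm_num), Real.rpow_one, ← Real.sqrt_eq_rpow]
  rw [hg, hb] at h1
  rw [h1, Real.sqrt_mul (by norm_num)]
  ring

lemma int_exp : Integrable (fun x : ℝ => exp (-(1/2) * x ^ 2)) :=
  integrable_exp_neg_mul_sq (by norm_num)

lemma int_x : Integrable (fun x : ℝ => x * exp (-(1/2) * x ^ 2)) :=
  integrable_mul_exp_neg_mul_sq (by norm_num)

lemma int_sq : Integrable (fun x : ℝ => x ^ 2 * exp (-(1/2) * x ^ 2)) := by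
  have h := integrable_rpow_mul_exp_neg_mul_sq (by norm_num : (0:ℝ) < 1/2)
    (by norm_num : (-1:ℝ) < 2)
  refine h.congr (Filter.Eventually.of_forall fun x => ?_)
  norm_num [Real.rpow_natCast]

noncomputable def gfac {m : ℕ} (k l r : Fin m) : ℝ → ℝ :=
  fun x => (if r = k then x else 1) * (if r = l then x else 1) * exp (-(1/2) * x ^ 2)

lemma gfac_integrable {m : ℕ} (k l r : Fin m) : Integrable (gfac k l r) := by
  unfold gfac
  by_cases h1 : r = k
  · subst h1
    by_cases h2 : r = l
    · subst h2
      simp only [eq_self_iff_true, if_true]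
      refine int_sq.congr (Filter.Eventually.of_forall fun x => ?_); ring
    · simp only [eq_self_iff_true, if_true, if_neg h2, mul_one]
      exact int_x
  · by_cases h2 : r = l
    · subst h2
      simp only [if_neg h1, eq_self_iff_true, if_true, one_mul]
      exact int_x
    · simp only [if_neg h1, if_neg h2, one_mul, mul_one]
      exact int_exp

lemma gfac_integral {m : ℕ} (k l r : Fin m) :
    ∫ x, gfac k l r x = if (r = k ∧ r = l) ∨ (r ≠ k ∧ r ≠ l) then Real.sqrt (2 * π)
      else 0 := by
  unfold gfac
  by_cases h1 : r = k
  · subst h1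
    by_cases h2 : r = l
    · subst h2
      simp only [eq_self_iff_true, if_true, ne_eq, not_true_eq_false, and_self, false_and,
        or_false]
      rw [show (∫ x : ℝ, x * x * exp (-(1/2) * x ^ 2)) = ∫ x : ℝ, x ^ 2 * exp (-(1/2) * x ^ 2)
        from by congr 1; funext x; ring, gauss2]
    · simp only [eq_self_iff_true, if_true, if_neg h2, mul_one]
      rw [gauss1, if_neg]
      simp [h2]
  · by_cases h2 : r = l
    · subst h2
      simp only [if_neg h1, eq_self_iff_true, if_true, one_mul]
      rw [gauss1, if_neg]
      simp [h1]
    · simp only [if_neg h1, if_neg h2, one_mul, mul_one]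
      rw [gauss0, if_pos]
      exact Or.inr ⟨h1, h2⟩

lemma gfac_prod {m : ℕ} (k l : Fin m) (u : Fin m → ℝ) :
    (u k * u l) * exp (-(1/2) * ∑ r, u r ^ 2) = ∏ r, gfac k l r (u r) := by
  unfold gfac
  rw [Finset.prod_mul_distrib, Finset.prod_mul_distrib, Finset.prod_ite_eq',
    Finset.prod_ite_eq', ← Real.exp_sum]
  simp [Finset.mul_sum]

lemma gauss_moment {m : ℕ} (k l : Fin m) :
    ∫ u : Fin m → ℝ, (u k * u l) * exp (-(1/2) * ∑ r, u r ^ 2)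
      = if k = l then Real.sqrt (2 * π) ^ m else 0 := by
  simp_rw [gfac_prod]
  rw [integral_fintype_prod_volume_eq_prod (f := fun r (x : ℝ) => gfac k l r x)]
  simp_rw [gfac_integral]
  rcases eq_or_ne k l with rfl | hkl
  · have he : ∀ x : Fin m, (if (x = k ∧ x = k) ∨ (x ≠ k ∧ x ≠ k) then Real.sqrt (2 * π) else 0)
        = Real.sqrt (2 * π) := by
      intro x
      rcases eq_or_ne x k with h | h <;> simp [h]
    simp only [he, Finset.prod_const, Finset.card_univ, Fintype.card_fin, eq_self_iff_true,
      if_true]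
  · rw [if_neg hkl]
    refine Finset.prod_eq_zero (Finset.mem_univ k) ?_
    simp [hkl, Ne.symm hkl]

lemma gauss_moment_integrable {m : ℕ} (k l : Fin m) :
    Integrable (fun u : Fin m → ℝ => (u k * u l) * exp (-(1/2) * ∑ r, u r ^ 2)) := by
  have h := Integrable.fintype_prod (f := fun r (x : ℝ) => gfac k l r x)
    (fun r => gfac_integrable k l r)
  exact h.congr (Filter.Eventually.of_forall fun u => (gfac_prod k l u).symm)

lemma gauss_quad {m p : ℕ} (N : Matrix (Fin p) (Fin m) ℝ) (i j : Fin p) :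
    ∫ u : Fin m → ℝ, ((N *ᵥ u) i * (N *ᵥ u) j) * exp (-(1/2) * ∑ r, u r ^ 2)
      = Real.sqrt (2 * π) ^ m * (N * Nᵀ) i j := by
  have hexp : ∀ u : Fin m → ℝ, ((N *ᵥ u) i * (N *ᵥ u) j) * exp (-(1/2) * ∑ r, u r ^ 2)
      = ∑ k, ∑ l, (N i k * N j l) * ((u k * u l) * exp (-(1/2) * ∑ r, u r ^ 2)) := by
    intro u
    simp only [mulVec, dotProduct]
    rw [Finset.sum_mul_sum, Finset.sum_mul]
    refine Finset.sum_congr rfl fun k _ => ?_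
    rw [Finset.sum_mul]
    exact Finset.sum_congr rfl fun l _ => by ring
  simp_rw [hexp]
  rw [integral_finset_sum _ (fun k _ => integrable_finset_sum _ (fun l _ =>
    (gauss_moment_integrable k l).const_mul _))]
  have : ∀ k : Fin m, ∫ u : Fin m → ℝ,
        (∑ l, (N i k * N j l) * ((u k * u l) * exp (-(1/2) * ∑ r, u r ^ 2)))
      = ∑ l, (N i k * N j l) * (if k = l then Real.sqrt (2 * π) ^ m else 0) := by
    intro k
    rw [integral_finset_sum _ (fun l _ => (gauss_moment_integrable k l).const_mul _)]
    exact Finset.sum_congr rfl fun l _ => by rw [MeasureTheory.integral_const_mul, gauss_moment]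
  simp_rw [this, mul_ite, mul_zero, Finset.sum_ite_eq, Finset.mem_univ, if_true]
  rw [Matrix.mul_apply, Finset.mul_sum]
  exact Finset.sum_congr rfl fun k _ => by rw [transpose_apply]; ring

lemma integral_comp_mulVec {m : ℕ} (A : Matrix (Fin m) (Fin m) ℝ) (hA : A.det ≠ 0)
    (f : (Fin m → ℝ) → ℝ) :
    ∫ x : Fin m → ℝ, f (A *ᵥ x) = |A.det|⁻¹ * ∫ y : Fin m → ℝ, f y := by
  have hI : Invertible A := A.invertibleOfIsUnitDet (isUnit_iff_ne_zero.2 hA)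
  let e : (Fin m → ℝ) ≃ₗ[ℝ] (Fin m → ℝ) := A.toLinearEquiv' hI
  let E : (Fin m → ℝ) ≃ᵐ (Fin m → ℝ) :=
    e.toContinuousLinearEquiv.toHomeomorph.toMeasurableEquiv
  have hE : ∀ x, E x = A *ᵥ x := fun x => rfl
  have hmap : Measure.map (⇑E) volume = ENNReal.ofReal |A.det⁻¹| • volume := by
    rw [show ⇑E = ⇑(Matrix.toLin' A) from rfl]
    exact Real.map_matrix_volume_pi_eq_smul_volume_pi hA
  calc ∫ x : Fin m → ℝ, f (A *ᵥ x) = ∫ x : Fin m → ℝ, f (E x) := by simp_rw [hE]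
    _ = ∫ y, f y ∂(Measure.map (⇑E) volume) := (MeasureTheory.integral_map_equiv E f).symm
    _ = |A.det|⁻¹ * ∫ y, f y := by
        rw [hmap, integral_smul_measure, ENNReal.toReal_ofReal (abs_nonneg _), abs_inv,
          smul_eq_mul]

lemma dot_mulVec_left {a b : Type*} [Fintype a] [Fintype b] (B : Matrix a b ℝ)
    (u : b → ℝ) (w : a → ℝ) :
    (B *ᵥ u) ⬝ᵥ w = u ⬝ᵥ (Bᵀ *ᵥ w) := by
  rw [dotProduct_comm, dotProduct_mulVec, dotProduct_comm, Matrix.mulVec_transpose]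

lemma real_sqrt_pow (x : ℝ) (hx : 0 ≤ x) (n : ℕ) :
    Real.sqrt (x ^ n) = Real.sqrt x ^ n := by
  rw [Real.sqrt_eq_rpow, Real.sqrt_eq_rpow, ← Real.rpow_natCast x n,
    ← Real.rpow_mul hx, mul_comm, Real.rpow_mul hx, Real.rpow_natCast]

end Aux

theorem stmt15 {m p : ℕ} (X : Matrix (Fin m) (Fin p) ℝ)
    (hX : Function.Injective X.mulVec) (β : Fin p → ℝ)
    (V : Matrix (Fin m) (Fin m) ℝ) (hV : V.PosDef) (α L₂ : ℝ)
    (hα : 0 < α) (hL₂ : 0 < L₂)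
    (g : (Fin m → ℝ) → ℝ)
    (hg : ∀ y, g y = (Real.sqrt ((2 * π) ^ m * V.det))⁻¹ *
      Real.exp (-(1 / 2) * ((y - X *ᵥ β) ⬝ᵥ V⁻¹ *ᵥ (y - X *ᵥ β))))
    (Gβ : (Fin m → ℝ) → (Fin p → ℝ))
    (hGβ : ∀ y, Gβ y = (-α * L₂ * V.det ^ (-(α / 2)) *
        Real.exp (-(α / 2) * ((y - X *ᵥ β) ⬝ᵥ V⁻¹ *ᵥ (y - X *ᵥ β))))
      • (Xᵀ *ᵥ (V⁻¹ *ᵥ (y - X *ᵥ β)))) :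
    (∀ i j : Fin p,
      ∫ y : Fin m → ℝ, (Gβ y i * Gβ y j) * g y
        = α ^ 2 * L₂ ^ 2 * V.det ^ (-α) * (1 + 2 * α) ^ (-(1 + (m : ℝ) / 2))
          * (Xᵀ * V⁻¹ * X) i j)
    ∧ (Matrix.of (fun i j : Fin p =>
        α ^ 2 * L₂ ^ 2 * V.det ^ (-α) * (1 + 2 * α) ^ (-(1 + (m : ℝ) / 2))
          * (Xᵀ * V⁻¹ * X) i j)).PosDef := by
  have hd : (0:ℝ) < V.det := hV.det_pos
  set d : ℝ := V.det with hd_def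
  -- square root of V
  set S : Matrix (Fin m) (Fin m) ℝ := open scoped MatrixOrder in CFC.sqrt V with hS_def
  have hSS : S * S = V := open scoped MatrixOrder in CFC.sqrt_mul_sqrt_self V hV.posSemidef.nonneg
  have hSherm : S.IsHermitian := open scoped MatrixOrder in (CFC.sqrt_nonneg V).posSemidef.1
  have hSsym : Sᵀ = S := by
    rw [← Matrix.conjTranspose_eq_transpose_of_trivial]; exact hSherm
  have hdetS_sq : S.det * S.det = d := by rw [← Matrix.det_mul, hSS]
  have hdetS_ne : S.det ≠ 0 := by
    intro h; rw [h, mul_zero] at hdetS_sq; exact (ne_of_gt hd) hdetS_sq.symm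
  have habsS : |S.det| = Real.sqrt d := by
    rw [← Real.sqrt_sq_eq_abs, sq, hdetS_sq]
  have hSunit : IsUnit S.det := isUnit_iff_ne_zero.2 hdetS_ne
  have hSinv_mul : S⁻¹ * S = 1 := Matrix.nonsing_inv_mul S hSunit
  have hmul_Sinv : S * S⁻¹ = 1 := Matrix.mul_nonsing_inv S hSunit
  have hVinv : V⁻¹ = S⁻¹ * S⁻¹ := by rw [← hSS, Matrix.mul_inv_rev]
  have hVinvS : V⁻¹ * S = S⁻¹ := by
    rw [hVinv, Matrix.mul_assoc, hSinv_mul, Matrix.mul_one]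
  have hSinvT : (S⁻¹)ᵀ = S⁻¹ := by rw [Matrix.transpose_nonsing_inv, hSsym]
  -- scalar t
  have h2α : (0:ℝ) < 1 + 2 * α := by linarith
  set t : ℝ := (Real.sqrt (1 + 2 * α))⁻¹ with ht_def
  have ht : 0 < t := inv_pos.2 (Real.sqrt_pos.2 h2α)
  have ht2 : t ^ 2 = (1 + 2 * α)⁻¹ := by
    rw [ht_def, inv_pow, Real.sq_sqrt h2α.le]
  -- the substitution matrix
  set A : Matrix (Fin m) (Fin m) ℝ := t • S with hA_def
  have hdetA : A.det = t ^ m * S.det := by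
    rw [hA_def, Matrix.det_smul, Fintype.card_fin]
  have hdetA_ne : A.det ≠ 0 := by
    rw [hdetA]; exact mul_ne_zero (pow_ne_zero _ (ne_of_gt ht)) hdetS_ne
  have habsA : |A.det| = t ^ m * Real.sqrt d := by
    rw [hdetA, abs_mul, abs_pow, abs_of_pos ht, habsS]
  -- N matrix
  set N : Matrix (Fin p) (Fin m) ℝ := Xᵀ * S⁻¹ with hN_def
  have hNNT : N * Nᵀ = Xᵀ * V⁻¹ * X := by
    rw [hN_def, Matrix.transpose_mul, hSinvT, Matrix.transpose_transpose, hVinv]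
    rw [Matrix.mul_assoc, Matrix.mul_assoc, Matrix.mul_assoc]
  -- quadratic form identity
  have hquad : ∀ u : Fin m → ℝ, (A *ᵥ u) ⬝ᵥ V⁻¹ *ᵥ (A *ᵥ u) = t ^ 2 * ∑ r, u r ^ 2 := by
    intro u
    rw [hA_def, Matrix.smul_mulVec, Matrix.mulVec_smul, smul_dotProduct,
      dotProduct_smul, Matrix.mulVec_mulVec, hVinvS,
      dot_mulVec_left, hSsym, Matrix.mulVec_mulVec, hmul_Sinv, Matrix.one_mulVec]
    rw [smul_eq_mul, smul_eq_mul, ← mul_assoc, ← sq]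
    congr 1
    rw [dotProduct]
    exact Finset.sum_congr rfl fun r _ => (sq (u r)).symm
  -- linear part identity
  have hlin : ∀ u : Fin m → ℝ, Xᵀ *ᵥ (V⁻¹ *ᵥ (A *ᵥ u)) = t • (N *ᵥ u) := by
    intro u
    rw [hA_def, Matrix.smul_mulVec, Matrix.mulVec_smul, Matrix.mulVec_smul]
    congr 1
    rw [Matrix.mulVec_mulVec, Matrix.mulVec_mulVec, Matrix.mul_assoc, hVinvS, hN_def]
  -- constants
  set c₀ : ℝ := d ^ (-(α/2)) with hc0_def
  have hc0 : 0 < c₀ := Real.rpow_pos_of_pos hd _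
  set n₀ : ℝ := Real.sqrt ((2 * π) ^ m * d) with hn0_def
  have h2π : (0:ℝ) < 2 * π := by positivity
  have hn0_eq : n₀ = Real.sqrt (2 * π) ^ m * Real.sqrt d := by
    rw [hn0_def, Real.sqrt_mul (by positivity), real_sqrt_pow _ h2π.le]
  have hn0 : 0 < n₀ := by
    rw [hn0_eq]; positivity
  set C : ℝ := (α * L₂ * c₀) ^ 2 * n₀⁻¹ with hC_def
  -- target scalar
  set K : ℝ := α ^ 2 * L₂ ^ 2 * d ^ (-α) * (1 + 2 * α) ^ (-(1 + (m : ℝ) / 2)) with hK_def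
  have hK : 0 < K := by
    rw [hK_def]
    have := Real.rpow_pos_of_pos hd (-α)
    have := Real.rpow_pos_of_pos h2α (-(1 + (m : ℝ) / 2))
    positivity
  constructor
  · intro i j
    set h : (Fin m → ℝ) → ℝ := fun z =>
      (((Xᵀ *ᵥ (V⁻¹ *ᵥ z)) i * (Xᵀ *ᵥ (V⁻¹ *ᵥ z)) j)
        * Real.exp (-((1 + 2 * α)/2) * (z ⬝ᵥ V⁻¹ *ᵥ z))) with hh_def
    -- step 1: pointwise form of the integrand
    have hstep1 : ∀ y : Fin m → ℝ, (Gβ y i * Gβ y j) * g y = C * h (y - X *ᵥ β) := by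
      intro y
      set z : Fin m → ℝ := y - X *ᵥ β with hz_def
      set q : ℝ := z ⬝ᵥ V⁻¹ *ᵥ z with hq_def
      have hE : Real.exp (-(α/2) * q) * Real.exp (-(α/2) * q) * Real.exp (-(1/2) * q)
          = Real.exp (-((1 + 2 * α)/2) * q) := by
        rw [← Real.exp_add, ← Real.exp_add]; congr 1; ring
      rw [hGβ, hg, hh_def]
      simp only [Pi.smul_apply, smul_eq_mul]
      rw [hC_def]
      linear_combination ((-α * L₂ * c₀) ^ 2 * ((Xᵀ *ᵥ (V⁻¹ *ᵥ z)) i *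
        (Xᵀ *ᵥ (V⁻¹ *ᵥ z)) j) * n₀⁻¹) * hE
    simp_rw [hstep1]
    rw [MeasureTheory.integral_const_mul]
    -- step 2: translation invariance
    have hstep2 : ∫ y : Fin m → ℝ, h (y - X *ᵥ β) = ∫ z : Fin m → ℝ, h z := by
      simp_rw [sub_eq_add_neg]
      exact integral_add_right_eq_self h (-(X *ᵥ β))
    rw [hstep2]
    -- step 3: change of variables z = A u
    have hstep3 : ∫ z : Fin m → ℝ, h z = |A.det| * ∫ u : Fin m → ℝ, h (A *ᵥ u) := by
      rw [integral_comp_mulVec A hdetA_ne h, ← mul_assoc, mul_inv_cancel₀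
        (abs_ne_zero.2 hdetA_ne), one_mul]
    rw [hstep3]
    -- step 4: evaluate h (A *ᵥ u)
    have hstep4 : ∀ u : Fin m → ℝ, h (A *ᵥ u)
        = t ^ 2 * (((N *ᵥ u) i * (N *ᵥ u) j) * Real.exp (-(1/2) * ∑ r, u r ^ 2)) := by
      intro u
      rw [hh_def]
      simp only [hlin u, hquad u, Pi.smul_apply, smul_eq_mul]
      have harg : -((1 + 2 * α)/2) * (t ^ 2 * ∑ r, u r ^ 2)
          = -(1/2) * ∑ r, u r ^ 2 := by
        rw [ht2]
        field_simp
      rw [harg]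
      ring
    simp_rw [hstep4]
    rw [MeasureTheory.integral_const_mul, gauss_quad, hNNT]
    -- step 5: the constants
    rw [habsA, hC_def, hn0_eq, hK_def]
    have hαL : (α * L₂ * c₀) ^ 2 = α ^ 2 * L₂ ^ 2 * d ^ (-α) := by
      rw [mul_pow, mul_pow, hc0_def, ← Real.rpow_natCast (d ^ (-(α/2))) 2,
        ← Real.rpow_mul hd.le]
      norm_num
    rw [hαL]
    have htm : t ^ m * t ^ 2 = (1 + 2 * α) ^ (-(1 + (m : ℝ) / 2)) := by
      rw [ht_def, Real.sqrt_eq_rpow, ← Real.rpow_neg h2α.le, ← Real.rpow_natCast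
        ((1 + 2*α) ^ (-(1/2) : ℝ)) m, ← Real.rpow_natCast ((1 + 2*α) ^ (-(1/2) : ℝ)) 2,
        ← Real.rpow_mul h2α.le, ← Real.rpow_mul h2α.le, ← Real.rpow_add h2α]
      norm_num
      ring_nf
    have hsq2π : Real.sqrt (2 * π) ≠ 0 := by positivity
    have hsqd : Real.sqrt d ≠ 0 := by positivity
    rw [← htm]
    field_simp
  · -- positive definiteness
    have hM : (Xᵀ * V⁻¹ * X).PosDef := by
      refine Matrix.PosDef.of_dotProduct_mulVec_pos ?_ ?_
      · have hh := Matrix.isHermitian_conjTranspose_mul_mul X hV.inv.1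
        rwa [Matrix.conjTranspose_eq_transpose_of_trivial] at hh
      · intro x hx
        have hXx : X *ᵥ x ≠ 0 := by
          intro hc
          exact hx (hX (by simpa using hc))
        have hpos := hV.inv.dotProduct_mulVec_pos hXx
        simp only [star_trivial] at hpos ⊢
        rw [← Matrix.mulVec_mulVec, ← Matrix.mulVec_mulVec, ← dot_mulVec_left X]
        exact hpos
    have heq : (Matrix.of (fun i j : Fin p =>
        α ^ 2 * L₂ ^ 2 * V.det ^ (-α) * (1 + 2 * α) ^ (-(1 + (m : ℝ) / 2))
          * (Xᵀ * V⁻¹ * X) i j)) = K • (Xᵀ * V⁻¹ * X) := rfl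
    rw [heq]
    refine Matrix.PosDef.of_dotProduct_mulVec_pos ?_ ?_
    · have hh := hM.1
      rw [Matrix.IsHermitian] at hh ⊢
      rw [Matrix.conjTranspose_smul, hh]
      congr 1
    · intro x hx
      have hpos := hM.dotProduct_mulVec_pos hx
      rw [Matrix.smul_mulVec, dotProduct_smul, smul_eq_mul]
      exact mul_pos hK hpos
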